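/- Let a > 0, b > 0, ε > 0 with a + ε < b, let δ > 0, and let w ∈ R^2. Then (b/π) ∫_{ {v ∈ R^2 : |v - (b/(b-a-ε)) w| > δ^{-1}} } e^{ε|v|^2} e^{a|v|^2} e^{-b|v-w|^2} dv ≤ e^{-(b-a-ε) δ^{-2}} · ( b/(b-a-ε) ) · exp( ((a+ε)b/(b-a-ε)) |w|^2 ). -/

import Mathlib

open MeasureTheory Real Set Metric

private lemma tail1d (c r : ℝ) (hc : 0 < c) (hr : 0 < r) :
    ∫ y in Ioi r, y * Real.exp (-c * y ^ 2) = Real.exp (-c * r ^ 2) / (2 * c) := by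
  have key := integral_Ioi_of_hasDerivAt_of_nonneg
    (g := fun y : ℝ => -Real.exp (-c * y ^ 2) / (2 * c))
    (g' := fun y : ℝ => y * Real.exp (-c * y ^ 2)) (a := r) (l := 0)
    (Continuous.continuousWithinAt (by fun_prop))
    (fun x _ => by
      have h1 : HasDerivAt (fun y : ℝ => -c * y ^ 2) (-c * (2 * x)) x := by
        simpa using ((hasDerivAt_pow 2 x).const_mul (-c))
      have h2 := (h1.exp.neg).div_const (2 * c)
      refine h2.congr_deriv ?_
      field_simp)
    (fun x hx => by
      have : 0 < x := hr.trans hx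
      positivity)
    ?_
  · rw [key]; ring
  · have h0 : Filter.Tendsto (fun y : ℝ => -c * y ^ 2) Filter.atTop Filter.atBot :=
      Filter.tendsto_neg_const_mul_pow_atTop two_ne_zero (by linarith)
    have := (Real.tendsto_exp_atBot.comp h0).neg.div_const (2 * c)
    simpa using this

private lemma tail2d (c r : ℝ) (hc : 0 < c) (hr : 0 < r) :
    ∫ u in {u : EuclideanSpace ℝ (Fin 2) | r < ‖u‖}, Real.exp (-c * ‖u‖ ^ 2)
      = Real.pi / c * Real.exp (-c * r ^ 2) := by
  have hmeas : MeasurableSet {u : EuclideanSpace ℝ (Fin 2) | r < ‖u‖} :=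
    measurableSet_lt measurable_const (by fun_prop)
  have h1 : ∫ u in {u : EuclideanSpace ℝ (Fin 2) | r < ‖u‖}, Real.exp (-c * ‖u‖ ^ 2)
      = ∫ u : EuclideanSpace ℝ (Fin 2),
          (Set.indicator (Ioi r) fun y => Real.exp (-c * y ^ 2)) ‖u‖ := by
    rw [← integral_indicator hmeas]
    refine integral_congr_ae (Filter.Eventually.of_forall fun u => ?_)
    by_cases h : r < ‖u‖ <;> simp [Set.indicator, h]
  rw [h1, integral_fun_norm_addHaar volume (fun y => (Set.indicator (Ioi r)
      fun y => Real.exp (-c * y ^ 2)) y)]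
  have hdim : Module.finrank ℝ (EuclideanSpace ℝ (Fin 2)) = 2 := by
    simp [finrank_euclideanSpace]
  rw [hdim]
  have hball : (volume (ball (0 : EuclideanSpace ℝ (Fin 2)) 1)).toReal = Real.pi := by
    rw [EuclideanSpace.volume_ball]
    simp [Real.sq_sqrt Real.pi_pos.le]
    rw [show (1:ℝ)+1 = 2 by norm_num, Real.Gamma_two]
    simp [Real.pi_pos.le]
  rw [measureReal_def, hball]
  have h2 : ∫ y in Ioi (0:ℝ), y ^ (2 - 1) •
      (Set.indicator (Ioi r) fun y => Real.exp (-c * y ^ 2)) y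
      = ∫ y in Ioi r, y * Real.exp (-c * y ^ 2) := by
    have : ∀ y : ℝ, y ^ (2 - 1) • (Set.indicator (Ioi r) fun y => Real.exp (-c * y ^ 2)) y
        = Set.indicator (Ioi r) (fun y => y * Real.exp (-c * y ^ 2)) y := by
      intro y
      by_cases h : y ∈ Ioi r <;> simp [Set.indicator, h]
    simp_rw [this]
    rw [setIntegral_indicator measurableSet_Ioi, Ioi_inter_Ioi, max_eq_right hr.le]
  rw [h2, tail1d c r hc hr]
  rw [nsmul_eq_mul, smul_eq_mul]
  field_simp
  ring


/-- For `a, b, ε > 0` with `a + ε < b`, `δ > 0` and `w ∈ ℝ²`,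
`(b/π) ∫_{|v - (b/(b-a-ε))w| > δ⁻¹} e^{ε|v|²} e^{a|v|²} e^{-b|v-w|²} dv
  ≤ e^{-(b-a-ε)δ⁻²} (b/(b-a-ε)) exp(((a+ε)b/(b-a-ε)) |w|²)`. -/
theorem gaussian_shift_tail_integral (a b ε δ : ℝ) (ha : 0 < a) (hb : 0 < b)
    (hε : 0 < ε) (hab : a + ε < b) (hδ : 0 < δ) (w : EuclideanSpace ℝ (Fin 2)) :
    (b / Real.pi) * ∫ v in {v : EuclideanSpace ℝ (Fin 2) |
          δ⁻¹ < ‖v - (b / (b - a - ε)) • w‖},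
        Real.exp (ε * ‖v‖ ^ 2) * Real.exp (a * ‖v‖ ^ 2) * Real.exp (-b * ‖v - w‖ ^ 2)
      ≤ Real.exp (-(b - a - ε) * δ⁻¹ ^ 2) * (b / (b - a - ε))
          * Real.exp ((a + ε) * b / (b - a - ε) * ‖w‖ ^ 2) := by
  have hc : 0 < b - a - ε := by linarith
  set c : ℝ := b - a - ε with hc_def
  set r : ℝ := δ⁻¹ with hr_def
  have hr : 0 < r := inv_pos.2 hδ
  set m : EuclideanSpace ℝ (Fin 2) := (b / c) • w with hm
  set K : ℝ := (a + ε) * b / c * ‖w‖ ^ 2 with hK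
  have hmeas : MeasurableSet {v : EuclideanSpace ℝ (Fin 2) | r < ‖v - m‖} :=
    measurableSet_lt measurable_const (by fun_prop)
  have hpt : ∀ v : EuclideanSpace ℝ (Fin 2),
      Real.exp (ε * ‖v‖ ^ 2) * Real.exp (a * ‖v‖ ^ 2) * Real.exp (-b * ‖v - w‖ ^ 2)
        = Real.exp K * Real.exp (-c * ‖v - m‖ ^ 2) := by
    intro v
    rw [← Real.exp_add, ← Real.exp_add, ← Real.exp_add]
    congr 1
    have h1 : ‖v - w‖ ^ 2 = ‖v‖ ^ 2 - 2 * (inner ℝ v w : ℝ) + ‖w‖ ^ 2 := by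
      rw [@norm_sub_sq_real]
    have h2 : ‖v - m‖ ^ 2
        = ‖v‖ ^ 2 - 2 * (b / c * (inner ℝ v w : ℝ)) + (b / c) ^ 2 * ‖w‖ ^ 2 := by
      rw [hm, @norm_sub_sq_real, real_inner_smul_right, norm_smul, Real.norm_eq_abs,
        abs_of_pos (by positivity)]
      ring
    rw [hK, h1, h2]
    field_simp
    ring
  have hstep1 : ∫ v in {v : EuclideanSpace ℝ (Fin 2) | r < ‖v - m‖},
        Real.exp (ε * ‖v‖ ^ 2) * Real.exp (a * ‖v‖ ^ 2) * Real.exp (-b * ‖v - w‖ ^ 2)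
      = Real.exp K * ∫ v in {v : EuclideanSpace ℝ (Fin 2) | r < ‖v - m‖},
          Real.exp (-c * ‖v - m‖ ^ 2) := by
    rw [← integral_const_mul]
    exact setIntegral_congr_fun hmeas fun v _ => hpt v
  have htrans : ∫ v in {v : EuclideanSpace ℝ (Fin 2) | r < ‖v - m‖},
        Real.exp (-c * ‖v - m‖ ^ 2)
      = ∫ u in {u : EuclideanSpace ℝ (Fin 2) | r < ‖u‖}, Real.exp (-c * ‖u‖ ^ 2) := by
    have hmp : MeasurePreserving (fun v : EuclideanSpace ℝ (Fin 2) => v - m) volume volume :=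
      measurePreserving_sub_right volume m
    have hemb : MeasurableEmbedding (fun v : EuclideanSpace ℝ (Fin 2) => v - m) :=
      (Homeomorph.subRight m).measurableEmbedding
    exact hmp.setIntegral_preimage_emb hemb (fun u => Real.exp (-c * ‖u‖ ^ 2))
      {u : EuclideanSpace ℝ (Fin 2) | r < ‖u‖}
  rw [hstep1, htrans, tail2d c r hc hr]
  have hπ : Real.pi ≠ 0 := Real.pi_ne_zero
  rw [show (b / Real.pi) * (Real.exp K * (Real.pi / c * Real.exp (-c * r ^ 2)))
      = Real.exp (-c * r ^ 2) * (b / c) * Real.exp K by field_simp]
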